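/- For n ≥ 3 and any nonzero α ∈ ℍ_ε^⊥ ⊂ A_{n+1}, the set {e₀, ε̃, ε, ẽ₀, α̃, αε, ε̃α, α} consists of pairwise orthogonal nonzero vectors; hence its real linear span 𝕆_α is an 8-dimensional vector subspace of A_{n+1} = ℝ^{2^{n+1}}. -/

import Mathlib

noncomputable section

/-- The Cayley–Dickson algebra `A n` of dimension `2^n` over `ℝ`:
`A 0 = ℝ` and `A (n+1) = A n × A n`. -/
def CD : ℕ → Type
  | 0 => ℝ
  | n + 1 => CD n × CD n

namespace CD

instance instAddCommGroup : (n : ℕ) → AddCommGroup (CD n)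
  | 0 => inferInstanceAs (AddCommGroup ℝ)
  | n + 1 =>
    letI := instAddCommGroup n
    inferInstanceAs (AddCommGroup (CD n × CD n))

instance instModule : (n : ℕ) → Module ℝ (CD n)
  | 0 => inferInstanceAs (Module ℝ ℝ)
  | n + 1 =>
    letI := instAddCommGroup n
    letI := instModule n
    inferInstanceAs (Module ℝ (CD n × CD n))

/-- Conjugation: `x̄ = x` on `ℝ` and `(x₁,x₂)‾ = (x̄₁, -x₂)`. -/
protected def conj : {n : ℕ} → CD n → CD n
  | 0, x => x
  | _ + 1, x => (CD.conj x.1, -x.2)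

/-- Cayley–Dickson multiplication: `(a,b)(x,y) = (ax - ȳb, ya + bx̄)`. -/
protected def mul : {n : ℕ} → CD n → CD n → CD n
  | 0, x, y => (show ℝ from x) * (show ℝ from y)
  | _ + 1, x, y =>
    (CD.mul x.1 y.1 - CD.mul (CD.conj y.2) x.2,
     CD.mul y.2 x.1 + CD.mul x.2 (CD.conj y.1))

instance instMul (n : ℕ) : Mul (CD n) := ⟨CD.mul⟩

/-- The multiplicative unit `e₀` of `A n`. -/
def e0 : (n : ℕ) → CD n
  | 0 => (1 : ℝ)
  | n + 1 => (e0 n, 0)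

/-- The element `ẽ₀ = (0, e₀)` of `A n` (junk value `0` for `n = 0`). -/
def te0 : (n : ℕ) → CD n
  | 0 => 0
  | n + 1 => (0, e0 n)

/-- The "complexification" `α̃ = (-b, a)` of `α = (a,b)` (junk value `0` for `n = 0`);
note `α̃ = α·ẽ₀`. -/
def tilde : {n : ℕ} → CD n → CD n
  | 0, _ => 0
  | _ + 1, x => (-x.2, x.1)

/-- The standard inner product on `A n ≅ ℝ^{2^n}`. -/
protected def inner : {n : ℕ} → CD n → CD n → ℝ
  | 0, x, y => (show ℝ from x) * (show ℝ from y)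
  | _ + 1, x, y => CD.inner x.1 y.1 + CD.inner x.2 y.2

/-- The euclidean norm on `A n`. -/
protected def norm {n : ℕ} (x : CD n) : ℝ := Real.sqrt (CD.inner x x)

/-- `x` is pure if its trace `t(x) = x + x̄` vanishes. -/
def IsPure {n : ℕ} (x : CD n) : Prop := x + CD.conj x = 0

/-- `x = (a,b)` is doubly pure if both `a` and `b` are pure
(equivalently, both `x` and `x̃` are pure). -/
def IsDoublyPure : {n : ℕ} → CD n → Prop
  | 0, x => x = 0
  | _ + 1, x => IsPure x.1 ∧ IsPure x.2

/-- The associator `(x,y,z) = (xy)z - x(yz)`. -/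
def assoc {n : ℕ} (x y z : CD n) : CD n := (x * y) * z - x * (y * z)

/-- The subspace `ℍ_a`: the real span of `{e₀, ã, a, ẽ₀}`. -/
def Ha {n : ℕ} (a : CD n) : Submodule ℝ (CD n) :=
  Submodule.span ℝ {e0 n, tilde a, a, te0 n}

/-- The orthogonal complement `ℍ_a^⊥` of `ℍ_a` in `A n`. -/
def HaPerp {n : ℕ} (a : CD n) : Set (CD n) :=
  {x | ∀ y ∈ Ha a, CD.inner x y = 0}

/-- The element `ε = (ẽ₀, 0)` of `A (n+1)`. -/
def eps (n : ℕ) : CD (n + 1) := (te0 n, 0)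

/-- `α̂ = (b,a)` for `α = (a,b) ∈ A (n+1)`. -/
def hat {n : ℕ} (x : CD (n + 1)) : CD (n + 1) := (x.2, x.1)

/-- The element `(a, b)` of `A (n+1) = A n × A n`. -/
def pair {n : ℕ} (a b : CD n) : CD (n + 1) := (a, b)

end CD

section Aux
namespace CD

theorem pair_eq {n : ℕ} {p q r s : CD n} (h1 : p = r) (h2 : q = s) :
    ((p, q) : CD (n+1)) = (r, s) := by rw [h1, h2]

@[simp] theorem inner_pair {n : ℕ} (p q r s : CD n) :
    CD.inner (n := n+1) (p, q) (r, s) = CD.inner p r + CD.inner q s := rfl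

theorem inner_zero_right : ∀ {n : ℕ} (x : CD n), CD.inner x 0 = 0
  | 0, x => mul_zero _
  | n + 1, x => by
    show CD.inner x.1 (0 : CD n) + CD.inner x.2 (0 : CD n) = 0
    rw [inner_zero_right, inner_zero_right, add_zero]

theorem inner_zero_left : ∀ {n : ℕ} (x : CD n), CD.inner 0 x = 0
  | 0, x => zero_mul _
  | n + 1, x => by
    show CD.inner (0 : CD n) x.1 + CD.inner (0 : CD n) x.2 = 0
    rw [inner_zero_left, inner_zero_left, add_zero]

theorem inner_comm : ∀ {n : ℕ} (x y : CD n), CD.inner x y = CD.inner y x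
  | 0, x, y => mul_comm _ _
  | n + 1, x, y => by
    show CD.inner x.1 y.1 + CD.inner x.2 y.2 = CD.inner y.1 x.1 + CD.inner y.2 x.2
    rw [inner_comm x.1, inner_comm x.2]

theorem inner_add_left : ∀ {n : ℕ} (x y z : CD n),
    CD.inner (x + y) z = CD.inner x z + CD.inner y z
  | 0, x, y, z => by
    show ((show ℝ from x) + (show ℝ from y)) * (show ℝ from z) = (show ℝ from x) * (show ℝ from z) + (show ℝ from y) * (show ℝ from z)
    ring
  | n + 1, x, y, z => by
    show CD.inner (x.1 + y.1) z.1 + CD.inner (x.2 + y.2) z.2 = _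
    rw [inner_add_left, inner_add_left]
    show _ = (CD.inner x.1 z.1 + CD.inner x.2 z.2) + (CD.inner y.1 z.1 + CD.inner y.2 z.2)
    ring

theorem inner_smul_left : ∀ {n : ℕ} (c : ℝ) (x y : CD n),
    CD.inner (c • x) y = c * CD.inner x y
  | 0, c, x, y => by
    show (c * (show ℝ from x)) * (show ℝ from y) = c * ((show ℝ from x) * (show ℝ from y))
    ring
  | n + 1, c, x, y => by
    show CD.inner (c • x.1) y.1 + CD.inner (c • x.2) y.2 = _
    rw [inner_smul_left, inner_smul_left]
    show _ = c * (CD.inner x.1 y.1 + CD.inner x.2 y.2)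
    ring

theorem inner_neg_left {n : ℕ} (x y : CD n) : CD.inner (-x) y = -CD.inner x y := by
  have h := inner_smul_left (-1 : ℝ) x y
  rw [neg_one_smul] at h
  rw [h]; ring

theorem inner_neg_right {n : ℕ} (x y : CD n) : CD.inner x (-y) = -CD.inner x y := by
  rw [inner_comm, inner_neg_left, inner_comm]

theorem inner_self_nonneg : ∀ {n : ℕ} (x : CD n), 0 ≤ CD.inner x x
  | 0, x => mul_self_nonneg _
  | n + 1, x => add_nonneg (inner_self_nonneg x.1) (inner_self_nonneg x.2)

theorem pair_eq_zero_iff {n : ℕ} (p q : CD n) :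
    ((p, q) : CD (n+1)) = 0 ↔ p = 0 ∧ q = 0 := by
  constructor
  · intro h
    exact ⟨congrArg (fun z : CD n × CD n => z.1) h,
           congrArg (fun z : CD n × CD n => z.2) h⟩
  · rintro ⟨h1, h2⟩; rw [h1, h2]; rfl

theorem eq_pair {n : ℕ} (x : CD (n+1)) : x = ((x.1, x.2) : CD (n+1)) := rfl

theorem inner_self_eq_zero : ∀ {n : ℕ} (x : CD n), CD.inner x x = 0 → x = 0
  | 0, x, h => by
    have h' : (show ℝ from x) * (show ℝ from x) = 0 := h
    exact mul_self_eq_zero.mp h'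
  | n + 1, x, h => by
    have h' : CD.inner x.1 x.1 + CD.inner x.2 x.2 = 0 := h
    have h1 := inner_self_nonneg x.1
    have h2 := inner_self_nonneg x.2
    have e1 : x.1 = 0 := inner_self_eq_zero x.1 (by linarith)
    have e2 : x.2 = 0 := inner_self_eq_zero x.2 (by linarith)
    rw [eq_pair x]
    exact (pair_eq_zero_iff x.1 x.2).mpr ⟨e1, e2⟩

theorem conj_zero : ∀ {n : ℕ}, CD.conj (0 : CD n) = 0
  | 0 => rfl
  | n + 1 => by
    show ((CD.conj (0 : CD n), -(0 : CD n)) : CD (n+1)) = 0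
    rw [conj_zero, neg_zero]; rfl

theorem conj_e0 : ∀ {n : ℕ}, CD.conj (e0 n) = e0 n
  | 0 => rfl
  | n + 1 => by
    show ((CD.conj (e0 n), -(0 : CD n)) : CD (n+1)) = (e0 n, 0)
    rw [conj_e0, neg_zero]

theorem conj_neg : ∀ {n : ℕ} (x : CD n), CD.conj (-x) = -CD.conj x
  | 0, x => rfl
  | n + 1, x => by
    show ((CD.conj (-x.1), -(-x.2)) : CD (n+1)) = (-(CD.conj x.1), -(-x.2))
    rw [conj_neg]

theorem mul_pair {n : ℕ} (x y : CD (n+1)) :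
    x * y = ((x.1 * y.1 - CD.conj y.2 * x.2, y.2 * x.1 + x.2 * CD.conj y.1) : CD (n+1)) := rfl

theorem zeroMul : ∀ {n : ℕ}, (∀ x : CD n, (0 : CD n) * x = 0) ∧ (∀ x : CD n, x * (0 : CD n) = 0)
  | 0 => ⟨fun x => by show (0 : ℝ) * (show ℝ from x) = (0 : ℝ); exact zero_mul _,
          fun x => by show (show ℝ from x) * (0 : ℝ) = (0 : ℝ); exact mul_zero _⟩
  | n + 1 => by
    obtain ⟨hz, hm⟩ := @zeroMul n
    constructor
    · intro x
      rw [mul_pair]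
      show (((0 : CD n) * x.1 - CD.conj x.2 * 0, x.2 * 0 + (0 : CD n) * CD.conj x.1) : CD (n+1)) = 0
      rw [hz, hm, hm, hz, sub_zero, add_zero]; rfl
    · intro x
      rw [mul_pair]
      show ((x.1 * 0 - CD.conj (0:CD n) * x.2, (0:CD n) * x.1 + x.2 * CD.conj 0) : CD (n+1)) = 0
      rw [conj_zero, hm, hz, hz, hm, sub_zero, add_zero]; rfl

theorem zero_mul' {n : ℕ} (x : CD n) : (0 : CD n) * x = 0 := zeroMul.1 x
theorem mul_zero' {n : ℕ} (x : CD n) : x * (0 : CD n) = 0 := zeroMul.2 x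

theorem e0Mul : ∀ {n : ℕ}, (∀ x : CD n, e0 n * x = x) ∧ (∀ x : CD n, x * e0 n = x)
  | 0 => ⟨fun x => by show (1 : ℝ) * (show ℝ from x) = (show ℝ from x); exact one_mul _,
          fun x => by show (show ℝ from x) * (1 : ℝ) = (show ℝ from x); exact mul_one _⟩
  | n + 1 => by
    obtain ⟨he, hm⟩ := @e0Mul n
    constructor
    · intro x
      rw [mul_pair]
      show ((e0 n * x.1 - CD.conj x.2 * 0, x.2 * e0 n + (0:CD n) * CD.conj x.1) : CD (n+1)) = x
      rw [he, hm, mul_zero', zero_mul', sub_zero, add_zero]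
      rfl
    · intro x
      rw [mul_pair]
      show ((x.1 * e0 n - CD.conj (0:CD n) * x.2, (0:CD n) * x.1 + x.2 * CD.conj (e0 n)) : CD (n+1)) = x
      rw [conj_zero, conj_e0, hm, zero_mul', zero_mul', hm, sub_zero, zero_add]
      rfl

theorem e0_mul' {n : ℕ} (x : CD n) : e0 n * x = x := e0Mul.1 x
theorem mul_e0' {n : ℕ} (x : CD n) : x * e0 n = x := e0Mul.2 x

theorem negMul : ∀ {n : ℕ}, (∀ x y : CD n, (-x) * y = -(x * y)) ∧ (∀ x y : CD n, x * (-y) = -(x * y))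
  | 0 => ⟨fun x y => by
            show (-(show ℝ from x)) * (show ℝ from y) = -((show ℝ from x) * (show ℝ from y))
            ring,
          fun x y => by
            show (show ℝ from x) * (-(show ℝ from y)) = -((show ℝ from x) * (show ℝ from y))
            ring⟩
  | n + 1 => by
    obtain ⟨hn, hm⟩ := @negMul n
    constructor
    · intro x y
      rw [mul_pair, mul_pair]
      refine pair_eq ?_ ?_
      · show (-x.1) * y.1 - CD.conj y.2 * (-x.2) = -(x.1 * y.1 - CD.conj y.2 * x.2)
        rw [hn, hm]; abel
      · show y.2 * (-x.1) + (-x.2) * CD.conj y.1 = -(y.2 * x.1 + x.2 * CD.conj y.1)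
        rw [hm, hn]; abel
    · intro x y
      rw [mul_pair, mul_pair]
      refine pair_eq ?_ ?_
      · show x.1 * (-y.1) - CD.conj (-y.2) * x.2 = -(x.1 * y.1 - CD.conj y.2 * x.2)
        rw [conj_neg, hm, hn]; abel
      · show (-y.2) * x.1 + x.2 * CD.conj (-y.1) = -(y.2 * x.1 + x.2 * CD.conj y.1)
        rw [conj_neg, hn, hm]; abel

theorem neg_mul' {n : ℕ} (x y : CD n) : (-x) * y = -(x * y) := negMul.1 x y
theorem mul_neg' {n : ℕ} (x y : CD n) : x * (-y) = -(x * y) := negMul.2 x y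

theorem mul_te0 {n : ℕ} (x : CD (n+1)) : x * te0 (n+1) = tilde x := by
  rw [mul_pair]
  show ((x.1 * 0 - CD.conj (e0 n) * x.2, e0 n * x.1 + x.2 * CD.conj (0:CD n)) : CD (n+1)) = (-x.2, x.1)
  rw [conj_e0, conj_zero, mul_zero', mul_zero', e0_mul', e0_mul', zero_sub, add_zero]

theorem te0_mul {n : ℕ} (x : CD (n+1)) : te0 (n+1) * x = ((-CD.conj x.2, CD.conj x.1) : CD (n+1)) := by
  rw [mul_pair]
  show (((0:CD n) * x.1 - CD.conj x.2 * e0 n, x.2 * (0:CD n) + e0 n * CD.conj x.1) : CD (n+1)) = _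
  rw [zero_mul', mul_e0', mul_zero', e0_mul', zero_sub, zero_add]

theorem conj_te0 {n : ℕ} : CD.conj (te0 (n+1)) = -te0 (n+1) := by
  show ((CD.conj (0 : CD n), -(e0 n)) : CD (n+1)) = ((-(0 : CD n), -(e0 n)) : CD (n+1))
  rw [conj_zero, neg_zero]

theorem conj_eq_neg_of_inner_e0 : ∀ {n : ℕ} (x : CD n), CD.inner x (e0 n) = 0 → CD.conj x = -x
  | 0, x, h => by
    have h' : (show ℝ from x) * 1 = 0 := h
    have hx : (show ℝ from x) = 0 := by rw [mul_one] at h'; exact h'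
    show x = -x
    show (show ℝ from x) = -(show ℝ from x)
    rw [hx]; ring
  | n + 1, x, h => by
    have h' : CD.inner x.1 (e0 n) + CD.inner x.2 (0 : CD n) = 0 := h
    rw [inner_zero_right, add_zero] at h'
    have ih := conj_eq_neg_of_inner_e0 x.1 h'
    show ((CD.conj x.1, -x.2) : CD (n+1)) = (-x.1, -x.2)
    rw [ih]

theorem e0_ne_zero : ∀ {n : ℕ}, e0 n ≠ 0
  | 0, h => one_ne_zero (α := ℝ) h
  | n + 1, h => by
    rw [show e0 (n+1) = ((e0 n, 0) : CD (n+1)) from rfl] at h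
    replace h := (pair_eq_zero_iff (e0 n) (0 : CD n)).mp h
    exact e0_ne_zero h.1

theorem te0_succ_ne_zero {n : ℕ} : te0 (n+1) ≠ 0 := by
  intro h
  rw [show te0 (n+1) = (((0 : CD n), e0 n) : CD (n+1)) from rfl] at h
  replace h := (pair_eq_zero_iff (0 : CD n) (e0 n)).mp h
  exact e0_ne_zero h.2

theorem tilde_eq_zero {n : ℕ} {x : CD (n+1)} (h : tilde x = 0) : x = 0 := by
  rw [show tilde x = ((-x.2, x.1) : CD (n+1)) from rfl] at h
  replace h := (pair_eq_zero_iff _ _).mp h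
  rw [eq_pair x]
  refine (pair_eq_zero_iff _ _).mpr ?_
  exact ⟨h.2, neg_eq_zero.mp h.1⟩

theorem inner_tilde_tilde {n : ℕ} (x y : CD (n+1)) :
    CD.inner (tilde x) (tilde y) = CD.inner x y := by
  show CD.inner (-x.2) (-y.2) + CD.inner x.1 y.1 = CD.inner x.1 y.1 + CD.inner x.2 y.2
  rw [inner_neg_left, inner_neg_right]; ring

theorem inner_tilde_self {n : ℕ} (x : CD (n+1)) : CD.inner (tilde x) x = 0 := by
  show CD.inner (-x.2) x.1 + CD.inner x.1 x.2 = 0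
  rw [inner_neg_left, inner_comm]; ring

theorem inner_self_tilde {n : ℕ} (x : CD (n+1)) : CD.inner x (tilde x) = 0 := by
  rw [inner_comm]; exact inner_tilde_self x

theorem tilde_skew {n : ℕ} (x y : CD (n+1)) :
    CD.inner x (tilde y) = -CD.inner y (tilde x) := by
  show CD.inner x.1 (-y.2) + CD.inner x.2 y.1 = -(CD.inner y.1 (-x.2) + CD.inner y.2 x.1)
  rw [inner_neg_right, inner_neg_right, inner_comm x.2 y.1, inner_comm x.1 y.2]; ring

theorem tilde_skew' {n : ℕ} (x y : CD (n+1)) :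
    CD.inner (tilde x) y = -CD.inner (tilde y) x := by
  show CD.inner (-x.2) y.1 + CD.inner x.1 y.2 = -(CD.inner (-y.2) x.1 + CD.inner y.1 x.2)
  rw [inner_neg_left, inner_neg_left, inner_comm x.1 y.2, inner_comm y.1 x.2]; ring

theorem inner_sum_left {n : ℕ} {ι : Type*} (s : Finset ι) (f : ι → CD n) (y : CD n) :
    CD.inner (∑ j ∈ s, f j) y = ∑ j ∈ s, CD.inner (f j) y := by
  classical
  induction s using Finset.induction with
  | empty => simp [inner_zero_left]
  | insert _ _ h ih => rw [Finset.sum_insert h, inner_add_left, ih, Finset.sum_insert h]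

theorem linearIndependent_of_orth {n : ℕ} {ι : Type*} [Fintype ι] (v : ι → CD n)
    (hnz : ∀ i, v i ≠ 0) (h : ∀ i j, i ≠ j → CD.inner (v i) (v j) = 0) :
    LinearIndependent ℝ v := by
  rw [Fintype.linearIndependent_iff]
  intro g hg i
  have hsum : CD.inner (∑ j, g j • v j) (v i) = g i * CD.inner (v i) (v i) := by
    rw [inner_sum_left]
    rw [Finset.sum_eq_single i]
    · rw [inner_smul_left]
    · intro j _ hji
      rw [inner_smul_left, h j i hji, mul_zero]
    · intro hi; exact absurd (Finset.mem_univ i) hi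
  rw [hg, inner_zero_left] at hsum
  have hpos : CD.inner (v i) (v i) ≠ 0 := fun hz => hnz i (inner_self_eq_zero _ hz)
  rcases mul_eq_zero.mp hsum.symm with h' | h'
  · exact h'
  · exact absurd h' hpos

end CD
end Aux

section Aux2
namespace CD

theorem tilde_pairP {n : ℕ} (p q : CD n) : tilde (pair p q) = pair (-q) p := rfl

theorem inner_pairP {n : ℕ} (p q r s : CD n) :
    CD.inner (pair p q) (pair r s) = CD.inner p r + CD.inner q s := rfl

theorem pairP_eq_zero_iff {n : ℕ} (p q : CD n) : pair p q = 0 ↔ p = 0 ∧ q = 0 :=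
  pair_eq_zero_iff p q

theorem inner_e0_te0 {n : ℕ} : CD.inner (e0 (n+1)) (te0 (n+1)) = 0 := by
  rw [show e0 (n+1) = ((e0 n, 0) : CD (n+1)) from rfl,
      show te0 (n+1) = (((0 : CD n), e0 n) : CD (n+1)) from rfl,
      inner_pair, inner_zero_right, inner_zero_left, add_zero]

theorem inner_te0_e0 {n : ℕ} : CD.inner (te0 (n+1)) (e0 (n+1)) = 0 :=
  (inner_comm _ _).trans inner_e0_te0

end CD
end Aux2

/-- The 8 generating vectors of `𝕆_α ⊆ A (n+1)`. -/
def ovec {n : ℕ} (α : CD (n + 1)) : Fin 8 → CD (n + 1) :=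
  ![CD.e0 (n + 1), CD.tilde (CD.eps n), CD.eps n, CD.te0 (n + 1),
    CD.tilde α, α * CD.eps n, CD.tilde (CD.eps n) * α, α]

/-- The subspace `𝕆_α`: the real span of `{e₀, ε̃, ε, ẽ₀, α̃, αε, ε̃α, α}`. -/
def Oa {n : ℕ} (α : CD (n + 1)) : Submodule ℝ (CD (n + 1)) :=
  Submodule.span ℝ (Set.range (ovec α))

/-- For `n ≥ 3` and nonzero `α ∈ ℍ_ε^⊥ ⊆ A (n+1)`, the vectors
`e₀, ε̃, ε, ẽ₀, α̃, αε, ε̃α, α` are nonzero and pairwise orthogonal; hence their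
span `𝕆_α` is an 8-dimensional subspace of `A (n+1) = ℝ^{2^{n+1}}`. -/
theorem statement11 (n : ℕ) (hn : 3 ≤ n) (α : CD (n + 1))
    (hα : α ∈ CD.HaPerp (CD.eps n)) (h0 : α ≠ 0) :
    (∀ i, ovec α i ≠ 0) ∧
    (∀ i j, i ≠ j → CD.inner (ovec α i) (ovec α j) = 0) ∧
    Module.finrank ℝ (Oa α) = 8 := by
  obtain ⟨m, rfl⟩ : ∃ m, n = m + 1 := ⟨n - 1, by omega⟩
  obtain ⟨a, b, rfl⟩ : ∃ a b : CD (m+1), α = CD.pair a b := ⟨α.1, α.2, rfl⟩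
  -- membership of the four generators
  have key : ∀ y ∈ ({CD.e0 (m+1+1), CD.tilde (CD.eps (m+1)), CD.eps (m+1),
      CD.te0 (m+1+1)} : Set (CD (m+1+1))), CD.inner (CD.pair a b) y = 0 :=
    fun y hy => hα y (Submodule.subset_span hy)
  have h1 : CD.inner (CD.pair a b) (CD.e0 (m+1+1)) = 0 := key _ (by simp)
  have h2 : CD.inner (CD.pair a b) (CD.tilde (CD.eps (m+1))) = 0 := key _ (by simp)
  have h3 : CD.inner (CD.pair a b) (CD.eps (m+1)) = 0 := key _ (by simp)
  have h4 : CD.inner (CD.pair a b) (CD.te0 (m+1+1)) = 0 := key _ (by simp)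
  -- component facts
  have ha1 : CD.inner a (CD.e0 (m+1)) = 0 := by
    have h' : CD.inner a (CD.e0 (m+1)) + CD.inner b (0 : CD (m+1)) = 0 := h1
    rwa [CD.inner_zero_right, add_zero] at h'
  have hb1 : CD.inner b (CD.e0 (m+1)) = 0 := by
    have h' : CD.inner a (0 : CD (m+1)) + CD.inner b (CD.e0 (m+1)) = 0 := h4
    rwa [CD.inner_zero_right, zero_add] at h'
  have ha2 : CD.inner a (CD.te0 (m+1)) = 0 := by
    have h' : CD.inner a (CD.te0 (m+1)) + CD.inner b (0 : CD (m+1)) = 0 := h3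
    rwa [CD.inner_zero_right, add_zero] at h'
  have hb2 : CD.inner b (CD.te0 (m+1)) = 0 := by
    have h' : CD.inner a (-(0 : CD (m+1))) + CD.inner b (CD.te0 (m+1)) = 0 := h2
    rwa [neg_zero, CD.inner_zero_right, zero_add] at h'
  -- purity
  have hca : CD.conj a = -a := CD.conj_eq_neg_of_inner_e0 a ha1
  have hcb : CD.conj b = -b := CD.conj_eq_neg_of_inner_e0 b hb1
  have ha11 : CD.inner a.1 (CD.e0 m) = 0 := by
    have h' : CD.inner a.1 (CD.e0 m) + CD.inner a.2 (0 : CD m) = 0 := ha1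
    rwa [CD.inner_zero_right, add_zero] at h'
  have ha22 : CD.inner a.2 (CD.e0 m) = 0 := by
    have h' : CD.inner a.1 (0 : CD m) + CD.inner a.2 (CD.e0 m) = 0 := ha2
    rwa [CD.inner_zero_right, zero_add] at h'
  have hb11 : CD.inner b.1 (CD.e0 m) = 0 := by
    have h' : CD.inner b.1 (CD.e0 m) + CD.inner b.2 (0 : CD m) = 0 := hb1
    rwa [CD.inner_zero_right, add_zero] at h'
  have hb22 : CD.inner b.2 (CD.e0 m) = 0 := by
    have h' : CD.inner b.1 (0 : CD m) + CD.inner b.2 (CD.e0 m) = 0 := hb2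
    rwa [CD.inner_zero_right, zero_add] at h'
  have hca1 : CD.conj a.1 = -a.1 := congrArg (fun z : CD m × CD m => z.1) hca
  have hca2 : CD.conj a.2 = -a.2 := CD.conj_eq_neg_of_inner_e0 a.2 ha22
  -- tilde component facts
  have hta_e0 : CD.inner (CD.tilde a) (CD.e0 (m+1)) = 0 := by
    have h' : CD.inner (-a.2) (CD.e0 m) + CD.inner a.1 (0 : CD m)
        = CD.inner (CD.tilde a) (CD.e0 (m+1)) := rfl
    rw [← h', CD.inner_neg_left, ha22, CD.inner_zero_right, neg_zero, add_zero]
  have hta_te0 : CD.inner (CD.tilde a) (CD.te0 (m+1)) = 0 := by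
    have h' : CD.inner (-a.2) (0 : CD m) + CD.inner a.1 (CD.e0 m)
        = CD.inner (CD.tilde a) (CD.te0 (m+1)) := rfl
    rw [← h', CD.inner_zero_right, ha11, add_zero]
  have htb_e0 : CD.inner (CD.tilde b) (CD.e0 (m+1)) = 0 := by
    have h' : CD.inner (-b.2) (CD.e0 m) + CD.inner b.1 (0 : CD m)
        = CD.inner (CD.tilde b) (CD.e0 (m+1)) := rfl
    rw [← h', CD.inner_neg_left, hb22, CD.inner_zero_right, neg_zero, add_zero]
  have htb_te0 : CD.inner (CD.tilde b) (CD.te0 (m+1)) = 0 := by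
    have h' : CD.inner (-b.2) (0 : CD m) + CD.inner b.1 (CD.e0 m)
        = CD.inner (CD.tilde b) (CD.te0 (m+1)) := rfl
    rw [← h', CD.inner_zero_right, hb11, add_zero]
  -- reversed orientations
  have ha1' := (CD.inner_comm (CD.e0 (m+1)) a).trans ha1
  have hb1' := (CD.inner_comm (CD.e0 (m+1)) b).trans hb1
  have ha2' := (CD.inner_comm (CD.te0 (m+1)) a).trans ha2
  have hb2' := (CD.inner_comm (CD.te0 (m+1)) b).trans hb2
  have hta_e0' := (CD.inner_comm (CD.e0 (m+1)) (CD.tilde a)).trans hta_e0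
  have hta_te0' := (CD.inner_comm (CD.te0 (m+1)) (CD.tilde a)).trans hta_te0
  have htb_e0' := (CD.inner_comm (CD.e0 (m+1)) (CD.tilde b)).trans htb_e0
  have htb_te0' := (CD.inner_comm (CD.te0 (m+1)) (CD.tilde b)).trans htb_te0
  -- cross facts
  have hC : CD.inner b a = CD.inner a b := CD.inner_comm _ _
  have hSK1 : CD.inner b (CD.tilde a) = -CD.inner a (CD.tilde b) := CD.tilde_skew _ _
  have hSK2 : CD.inner (CD.tilde b) a = -CD.inner (CD.tilde a) b := CD.tilde_skew' _ _
  have hTT : CD.inner (CD.tilde a) (CD.tilde b) = CD.inner a b := CD.inner_tilde_tilde _ _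
  have hTT' : CD.inner (CD.tilde b) (CD.tilde a) = CD.inner a b :=
    (CD.inner_tilde_tilde _ _).trans hC
  -- product equalities
  have hv5 : CD.pair a b * CD.eps (m+1) = CD.pair (CD.tilde a) (-CD.tilde b) := by
    rw [CD.mul_pair]
    refine CD.pair_eq ?_ ?_
    · show a * CD.te0 (m+1) - CD.conj (0 : CD (m+1)) * b = CD.tilde a
      rw [CD.conj_zero, CD.zero_mul', CD.mul_te0, sub_zero]
    · show (0 : CD (m+1)) * a + b * CD.conj (CD.te0 (m+1)) = -CD.tilde b
      rw [CD.zero_mul', CD.conj_te0, CD.mul_neg', CD.mul_te0, zero_add]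
  have hv6 : CD.tilde (CD.eps (m+1)) * CD.pair a b = CD.pair (CD.tilde b) (CD.tilde a) := by
    rw [CD.mul_pair]
    refine CD.pair_eq ?_ ?_
    · show (-(0 : CD (m+1))) * a - CD.conj b * CD.te0 (m+1) = CD.tilde b
      rw [neg_zero, CD.zero_mul', hcb, CD.neg_mul', CD.mul_te0, zero_sub, neg_neg]
    · show b * (-(0 : CD (m+1))) + CD.te0 (m+1) * CD.conj a = CD.tilde a
      rw [neg_zero, CD.mul_zero', hca, CD.mul_neg', CD.te0_mul, zero_add]
      show ((-(-CD.conj a.2), -CD.conj a.1) : CD (m+1)) = ((-a.2, a.1) : CD (m+1))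
      rw [neg_neg, hca2, hca1, neg_neg]
  have hv5' : CD.pair a b * CD.pair (CD.te0 (m+1)) (0 : CD (m+1))
      = CD.pair (CD.tilde a) (-CD.tilde b) := hv5
  have hv6' : CD.pair (0 : CD (m+1)) (CD.te0 (m+1)) * CD.pair a b
      = CD.pair (CD.tilde b) (CD.tilde a) := by
    rw [← hv6]
    congr 1
    show CD.pair (0 : CD (m+1)) (CD.te0 (m+1)) = CD.pair (-(0 : CD (m+1))) (CD.te0 (m+1))
    rw [neg_zero]
  -- pair forms of the named vectors
  have hE : CD.e0 (m+1+1) = CD.pair (CD.e0 (m+1)) (0 : CD (m+1)) := rfl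
  have hT : CD.te0 (m+1+1) = CD.pair (0 : CD (m+1)) (CD.e0 (m+1)) := rfl
  have hEps : CD.eps (m+1) = CD.pair (CD.te0 (m+1)) (0 : CD (m+1)) := rfl
  -- nonzeroness
  have n0 : CD.e0 (m+1+1) ≠ 0 := CD.e0_ne_zero
  have n1 : CD.tilde (CD.eps (m+1)) ≠ 0 := by
    intro h
    have h' := CD.tilde_eq_zero h
    rw [hEps, CD.pairP_eq_zero_iff] at h'
    exact CD.te0_succ_ne_zero h'.1
  have n2 : CD.eps (m+1) ≠ 0 := by
    intro h
    rw [hEps, CD.pairP_eq_zero_iff] at h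
    exact CD.te0_succ_ne_zero h.1
  have n3 : CD.te0 (m+1+1) ≠ 0 := CD.te0_succ_ne_zero
  have n4 : CD.tilde (CD.pair a b) ≠ 0 := fun h => h0 (CD.tilde_eq_zero h)
  have n5 : CD.pair a b * CD.eps (m+1) ≠ 0 := by
    intro h
    rw [hv5, CD.pairP_eq_zero_iff] at h
    obtain ⟨e1, e2⟩ := h
    apply h0
    rw [CD.pairP_eq_zero_iff]
    exact ⟨CD.tilde_eq_zero e1, CD.tilde_eq_zero (neg_eq_zero.mp e2)⟩
  have n6 : CD.tilde (CD.eps (m+1)) * CD.pair a b ≠ 0 := by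
    intro h
    rw [hv6, CD.pairP_eq_zero_iff] at h
    apply h0
    rw [CD.pairP_eq_zero_iff]
    exact ⟨CD.tilde_eq_zero h.2, CD.tilde_eq_zero h.1⟩
  have hnz : ∀ i, ovec (CD.pair a b) i ≠ 0 := by
    intro i
    fin_cases i <;>
      simp only [ovec, Matrix.cons_val_zero, Matrix.cons_val_one, Matrix.head_cons,
        Matrix.cons_val_succ] <;>
      first
        | exact n0 | exact n1 | exact n2 | exact n3 | exact n4 | exact n5 | exact n6
        | exact h0
  have o01 : CD.inner (CD.e0 (m+1+1)) (CD.tilde (CD.eps (m+1))) = 0 := by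
    simp [hE, hT, hEps, CD.tilde_pairP, CD.inner_pairP, CD.inner_zero_left, CD.inner_zero_right, CD.inner_neg_left, CD.inner_neg_right, CD.inner_tilde_self, CD.inner_self_tilde, CD.inner_e0_te0, CD.inner_te0_e0, ha1, hb1, ha2, hb2, ha1', hb1', ha2', hb2', hta_e0, hta_te0, htb_e0, htb_te0, hta_e0', hta_te0', htb_e0', htb_te0', hC, hSK1, hSK2, hTT, hTT', neg_zero, neg_neg]
  have o10 : CD.inner (CD.tilde (CD.eps (m+1))) (CD.e0 (m+1+1)) = 0 := (CD.inner_comm _ _).trans o01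
  have o02 : CD.inner (CD.e0 (m+1+1)) (CD.eps (m+1)) = 0 := by
    simp [hE, hT, hEps, CD.tilde_pairP, CD.inner_pairP, CD.inner_zero_left, CD.inner_zero_right, CD.inner_neg_left, CD.inner_neg_right, CD.inner_tilde_self, CD.inner_self_tilde, CD.inner_e0_te0, CD.inner_te0_e0, ha1, hb1, ha2, hb2, ha1', hb1', ha2', hb2', hta_e0, hta_te0, htb_e0, htb_te0, hta_e0', hta_te0', htb_e0', htb_te0', hC, hSK1, hSK2, hTT, hTT', neg_zero, neg_neg]
  have o20 : CD.inner (CD.eps (m+1)) (CD.e0 (m+1+1)) = 0 := (CD.inner_comm _ _).trans o02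
  have o03 : CD.inner (CD.e0 (m+1+1)) (CD.te0 (m+1+1)) = 0 := by
    simp [hE, hT, hEps, CD.tilde_pairP, CD.inner_pairP, CD.inner_zero_left, CD.inner_zero_right, CD.inner_neg_left, CD.inner_neg_right, CD.inner_tilde_self, CD.inner_self_tilde, CD.inner_e0_te0, CD.inner_te0_e0, ha1, hb1, ha2, hb2, ha1', hb1', ha2', hb2', hta_e0, hta_te0, htb_e0, htb_te0, hta_e0', hta_te0', htb_e0', htb_te0', hC, hSK1, hSK2, hTT, hTT', neg_zero, neg_neg]
  have o30 : CD.inner (CD.te0 (m+1+1)) (CD.e0 (m+1+1)) = 0 := (CD.inner_comm _ _).trans o03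
  have o04 : CD.inner (CD.e0 (m+1+1)) (CD.tilde (CD.pair a b)) = 0 := by
    simp [hE, hT, hEps, CD.tilde_pairP, CD.inner_pairP, CD.inner_zero_left, CD.inner_zero_right, CD.inner_neg_left, CD.inner_neg_right, CD.inner_tilde_self, CD.inner_self_tilde, CD.inner_e0_te0, CD.inner_te0_e0, ha1, hb1, ha2, hb2, ha1', hb1', ha2', hb2', hta_e0, hta_te0, htb_e0, htb_te0, hta_e0', hta_te0', htb_e0', htb_te0', hC, hSK1, hSK2, hTT, hTT', neg_zero, neg_neg]
  have o40 : CD.inner (CD.tilde (CD.pair a b)) (CD.e0 (m+1+1)) = 0 := (CD.inner_comm _ _).trans o04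
  have o05 : CD.inner (CD.e0 (m+1+1)) (CD.pair a b * CD.eps (m+1)) = 0 := by
    rw [hv5]; simp [hE, hT, hEps, CD.tilde_pairP, CD.inner_pairP, CD.inner_zero_left, CD.inner_zero_right, CD.inner_neg_left, CD.inner_neg_right, CD.inner_tilde_self, CD.inner_self_tilde, CD.inner_e0_te0, CD.inner_te0_e0, ha1, hb1, ha2, hb2, ha1', hb1', ha2', hb2', hta_e0, hta_te0, htb_e0, htb_te0, hta_e0', hta_te0', htb_e0', htb_te0', hC, hSK1, hSK2, hTT, hTT', neg_zero, neg_neg]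
  have o50 : CD.inner (CD.pair a b * CD.eps (m+1)) (CD.e0 (m+1+1)) = 0 := (CD.inner_comm _ _).trans o05
  have o06 : CD.inner (CD.e0 (m+1+1)) (CD.tilde (CD.eps (m+1)) * CD.pair a b) = 0 := by
    rw [hv6]; simp [hE, hT, hEps, CD.tilde_pairP, CD.inner_pairP, CD.inner_zero_left, CD.inner_zero_right, CD.inner_neg_left, CD.inner_neg_right, CD.inner_tilde_self, CD.inner_self_tilde, CD.inner_e0_te0, CD.inner_te0_e0, ha1, hb1, ha2, hb2, ha1', hb1', ha2', hb2', hta_e0, hta_te0, htb_e0, htb_te0, hta_e0', hta_te0', htb_e0', htb_te0', hC, hSK1, hSK2, hTT, hTT', neg_zero, neg_neg]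
  have o60 : CD.inner (CD.tilde (CD.eps (m+1)) * CD.pair a b) (CD.e0 (m+1+1)) = 0 := (CD.inner_comm _ _).trans o06
  have o07 : CD.inner (CD.e0 (m+1+1)) (CD.pair a b) = 0 := by
    simp [hE, hT, hEps, CD.tilde_pairP, CD.inner_pairP, CD.inner_zero_left, CD.inner_zero_right, CD.inner_neg_left, CD.inner_neg_right, CD.inner_tilde_self, CD.inner_self_tilde, CD.inner_e0_te0, CD.inner_te0_e0, ha1, hb1, ha2, hb2, ha1', hb1', ha2', hb2', hta_e0, hta_te0, htb_e0, htb_te0, hta_e0', hta_te0', htb_e0', htb_te0', hC, hSK1, hSK2, hTT, hTT', neg_zero, neg_neg]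
  have o70 : CD.inner (CD.pair a b) (CD.e0 (m+1+1)) = 0 := (CD.inner_comm _ _).trans o07
  have o12 : CD.inner (CD.tilde (CD.eps (m+1))) (CD.eps (m+1)) = 0 := by
    simp [hE, hT, hEps, CD.tilde_pairP, CD.inner_pairP, CD.inner_zero_left, CD.inner_zero_right, CD.inner_neg_left, CD.inner_neg_right, CD.inner_tilde_self, CD.inner_self_tilde, CD.inner_e0_te0, CD.inner_te0_e0, ha1, hb1, ha2, hb2, ha1', hb1', ha2', hb2', hta_e0, hta_te0, htb_e0, htb_te0, hta_e0', hta_te0', htb_e0', htb_te0', hC, hSK1, hSK2, hTT, hTT', neg_zero, neg_neg]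
  have o21 : CD.inner (CD.eps (m+1)) (CD.tilde (CD.eps (m+1))) = 0 := (CD.inner_comm _ _).trans o12
  have o13 : CD.inner (CD.tilde (CD.eps (m+1))) (CD.te0 (m+1+1)) = 0 := by
    simp [hE, hT, hEps, CD.tilde_pairP, CD.inner_pairP, CD.inner_zero_left, CD.inner_zero_right, CD.inner_neg_left, CD.inner_neg_right, CD.inner_tilde_self, CD.inner_self_tilde, CD.inner_e0_te0, CD.inner_te0_e0, ha1, hb1, ha2, hb2, ha1', hb1', ha2', hb2', hta_e0, hta_te0, htb_e0, htb_te0, hta_e0', hta_te0', htb_e0', htb_te0', hC, hSK1, hSK2, hTT, hTT', neg_zero, neg_neg]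
  have o31 : CD.inner (CD.te0 (m+1+1)) (CD.tilde (CD.eps (m+1))) = 0 := (CD.inner_comm _ _).trans o13
  have o14 : CD.inner (CD.tilde (CD.eps (m+1))) (CD.tilde (CD.pair a b)) = 0 := by
    simp [hE, hT, hEps, CD.tilde_pairP, CD.inner_pairP, CD.inner_zero_left, CD.inner_zero_right, CD.inner_neg_left, CD.inner_neg_right, CD.inner_tilde_self, CD.inner_self_tilde, CD.inner_e0_te0, CD.inner_te0_e0, ha1, hb1, ha2, hb2, ha1', hb1', ha2', hb2', hta_e0, hta_te0, htb_e0, htb_te0, hta_e0', hta_te0', htb_e0', htb_te0', hC, hSK1, hSK2, hTT, hTT', neg_zero, neg_neg]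
  have o41 : CD.inner (CD.tilde (CD.pair a b)) (CD.tilde (CD.eps (m+1))) = 0 := (CD.inner_comm _ _).trans o14
  have o15 : CD.inner (CD.tilde (CD.eps (m+1))) (CD.pair a b * CD.eps (m+1)) = 0 := by
    rw [hv5]; simp [hE, hT, hEps, CD.tilde_pairP, CD.inner_pairP, CD.inner_zero_left, CD.inner_zero_right, CD.inner_neg_left, CD.inner_neg_right, CD.inner_tilde_self, CD.inner_self_tilde, CD.inner_e0_te0, CD.inner_te0_e0, ha1, hb1, ha2, hb2, ha1', hb1', ha2', hb2', hta_e0, hta_te0, htb_e0, htb_te0, hta_e0', hta_te0', htb_e0', htb_te0', hC, hSK1, hSK2, hTT, hTT', neg_zero, neg_neg]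
  have o51 : CD.inner (CD.pair a b * CD.eps (m+1)) (CD.tilde (CD.eps (m+1))) = 0 := (CD.inner_comm _ _).trans o15
  have o16 : CD.inner (CD.tilde (CD.eps (m+1))) (CD.tilde (CD.eps (m+1)) * CD.pair a b) = 0 := by
    rw [hv6]; simp [hE, hT, hEps, CD.tilde_pairP, CD.inner_pairP, CD.inner_zero_left, CD.inner_zero_right, CD.inner_neg_left, CD.inner_neg_right, CD.inner_tilde_self, CD.inner_self_tilde, CD.inner_e0_te0, CD.inner_te0_e0, ha1, hb1, ha2, hb2, ha1', hb1', ha2', hb2', hta_e0, hta_te0, htb_e0, htb_te0, hta_e0', hta_te0', htb_e0', htb_te0', hC, hSK1, hSK2, hTT, hTT', neg_zero, neg_neg]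
  have o61 : CD.inner (CD.tilde (CD.eps (m+1)) * CD.pair a b) (CD.tilde (CD.eps (m+1))) = 0 := (CD.inner_comm _ _).trans o16
  have o17 : CD.inner (CD.tilde (CD.eps (m+1))) (CD.pair a b) = 0 := by
    simp [hE, hT, hEps, CD.tilde_pairP, CD.inner_pairP, CD.inner_zero_left, CD.inner_zero_right, CD.inner_neg_left, CD.inner_neg_right, CD.inner_tilde_self, CD.inner_self_tilde, CD.inner_e0_te0, CD.inner_te0_e0, ha1, hb1, ha2, hb2, ha1', hb1', ha2', hb2', hta_e0, hta_te0, htb_e0, htb_te0, hta_e0', hta_te0', htb_e0', htb_te0', hC, hSK1, hSK2, hTT, hTT', neg_zero, neg_neg]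
  have o71 : CD.inner (CD.pair a b) (CD.tilde (CD.eps (m+1))) = 0 := (CD.inner_comm _ _).trans o17
  have o23 : CD.inner (CD.eps (m+1)) (CD.te0 (m+1+1)) = 0 := by
    simp [hE, hT, hEps, CD.tilde_pairP, CD.inner_pairP, CD.inner_zero_left, CD.inner_zero_right, CD.inner_neg_left, CD.inner_neg_right, CD.inner_tilde_self, CD.inner_self_tilde, CD.inner_e0_te0, CD.inner_te0_e0, ha1, hb1, ha2, hb2, ha1', hb1', ha2', hb2', hta_e0, hta_te0, htb_e0, htb_te0, hta_e0', hta_te0', htb_e0', htb_te0', hC, hSK1, hSK2, hTT, hTT', neg_zero, neg_neg]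
  have o32 : CD.inner (CD.te0 (m+1+1)) (CD.eps (m+1)) = 0 := (CD.inner_comm _ _).trans o23
  have o24 : CD.inner (CD.eps (m+1)) (CD.tilde (CD.pair a b)) = 0 := by
    simp [hE, hT, hEps, CD.tilde_pairP, CD.inner_pairP, CD.inner_zero_left, CD.inner_zero_right, CD.inner_neg_left, CD.inner_neg_right, CD.inner_tilde_self, CD.inner_self_tilde, CD.inner_e0_te0, CD.inner_te0_e0, ha1, hb1, ha2, hb2, ha1', hb1', ha2', hb2', hta_e0, hta_te0, htb_e0, htb_te0, hta_e0', hta_te0', htb_e0', htb_te0', hC, hSK1, hSK2, hTT, hTT', neg_zero, neg_neg]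
  have o42 : CD.inner (CD.tilde (CD.pair a b)) (CD.eps (m+1)) = 0 := (CD.inner_comm _ _).trans o24
  have o25 : CD.inner (CD.eps (m+1)) (CD.pair a b * CD.eps (m+1)) = 0 := by
    rw [hv5]; simp [hE, hT, hEps, CD.tilde_pairP, CD.inner_pairP, CD.inner_zero_left, CD.inner_zero_right, CD.inner_neg_left, CD.inner_neg_right, CD.inner_tilde_self, CD.inner_self_tilde, CD.inner_e0_te0, CD.inner_te0_e0, ha1, hb1, ha2, hb2, ha1', hb1', ha2', hb2', hta_e0, hta_te0, htb_e0, htb_te0, hta_e0', hta_te0', htb_e0', htb_te0', hC, hSK1, hSK2, hTT, hTT', neg_zero, neg_neg]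
  have o52 : CD.inner (CD.pair a b * CD.eps (m+1)) (CD.eps (m+1)) = 0 := (CD.inner_comm _ _).trans o25
  have o26 : CD.inner (CD.eps (m+1)) (CD.tilde (CD.eps (m+1)) * CD.pair a b) = 0 := by
    rw [hv6]; simp [hE, hT, hEps, CD.tilde_pairP, CD.inner_pairP, CD.inner_zero_left, CD.inner_zero_right, CD.inner_neg_left, CD.inner_neg_right, CD.inner_tilde_self, CD.inner_self_tilde, CD.inner_e0_te0, CD.inner_te0_e0, ha1, hb1, ha2, hb2, ha1', hb1', ha2', hb2', hta_e0, hta_te0, htb_e0, htb_te0, hta_e0', hta_te0', htb_e0', htb_te0', hC, hSK1, hSK2, hTT, hTT', neg_zero, neg_neg]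
  have o62 : CD.inner (CD.tilde (CD.eps (m+1)) * CD.pair a b) (CD.eps (m+1)) = 0 := (CD.inner_comm _ _).trans o26
  have o27 : CD.inner (CD.eps (m+1)) (CD.pair a b) = 0 := by
    simp [hE, hT, hEps, CD.tilde_pairP, CD.inner_pairP, CD.inner_zero_left, CD.inner_zero_right, CD.inner_neg_left, CD.inner_neg_right, CD.inner_tilde_self, CD.inner_self_tilde, CD.inner_e0_te0, CD.inner_te0_e0, ha1, hb1, ha2, hb2, ha1', hb1', ha2', hb2', hta_e0, hta_te0, htb_e0, htb_te0, hta_e0', hta_te0', htb_e0', htb_te0', hC, hSK1, hSK2, hTT, hTT', neg_zero, neg_neg]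
  have o72 : CD.inner (CD.pair a b) (CD.eps (m+1)) = 0 := (CD.inner_comm _ _).trans o27
  have o34 : CD.inner (CD.te0 (m+1+1)) (CD.tilde (CD.pair a b)) = 0 := by
    simp [hE, hT, hEps, CD.tilde_pairP, CD.inner_pairP, CD.inner_zero_left, CD.inner_zero_right, CD.inner_neg_left, CD.inner_neg_right, CD.inner_tilde_self, CD.inner_self_tilde, CD.inner_e0_te0, CD.inner_te0_e0, ha1, hb1, ha2, hb2, ha1', hb1', ha2', hb2', hta_e0, hta_te0, htb_e0, htb_te0, hta_e0', hta_te0', htb_e0', htb_te0', hC, hSK1, hSK2, hTT, hTT', neg_zero, neg_neg]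
  have o43 : CD.inner (CD.tilde (CD.pair a b)) (CD.te0 (m+1+1)) = 0 := (CD.inner_comm _ _).trans o34
  have o35 : CD.inner (CD.te0 (m+1+1)) (CD.pair a b * CD.eps (m+1)) = 0 := by
    rw [hv5]; simp [hE, hT, hEps, CD.tilde_pairP, CD.inner_pairP, CD.inner_zero_left, CD.inner_zero_right, CD.inner_neg_left, CD.inner_neg_right, CD.inner_tilde_self, CD.inner_self_tilde, CD.inner_e0_te0, CD.inner_te0_e0, ha1, hb1, ha2, hb2, ha1', hb1', ha2', hb2', hta_e0, hta_te0, htb_e0, htb_te0, hta_e0', hta_te0', htb_e0', htb_te0', hC, hSK1, hSK2, hTT, hTT', neg_zero, neg_neg]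
  have o53 : CD.inner (CD.pair a b * CD.eps (m+1)) (CD.te0 (m+1+1)) = 0 := (CD.inner_comm _ _).trans o35
  have o36 : CD.inner (CD.te0 (m+1+1)) (CD.tilde (CD.eps (m+1)) * CD.pair a b) = 0 := by
    rw [hv6]; simp [hE, hT, hEps, CD.tilde_pairP, CD.inner_pairP, CD.inner_zero_left, CD.inner_zero_right, CD.inner_neg_left, CD.inner_neg_right, CD.inner_tilde_self, CD.inner_self_tilde, CD.inner_e0_te0, CD.inner_te0_e0, ha1, hb1, ha2, hb2, ha1', hb1', ha2', hb2', hta_e0, hta_te0, htb_e0, htb_te0, hta_e0', hta_te0', htb_e0', htb_te0', hC, hSK1, hSK2, hTT, hTT', neg_zero, neg_neg]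
  have o63 : CD.inner (CD.tilde (CD.eps (m+1)) * CD.pair a b) (CD.te0 (m+1+1)) = 0 := (CD.inner_comm _ _).trans o36
  have o37 : CD.inner (CD.te0 (m+1+1)) (CD.pair a b) = 0 := by
    simp [hE, hT, hEps, CD.tilde_pairP, CD.inner_pairP, CD.inner_zero_left, CD.inner_zero_right, CD.inner_neg_left, CD.inner_neg_right, CD.inner_tilde_self, CD.inner_self_tilde, CD.inner_e0_te0, CD.inner_te0_e0, ha1, hb1, ha2, hb2, ha1', hb1', ha2', hb2', hta_e0, hta_te0, htb_e0, htb_te0, hta_e0', hta_te0', htb_e0', htb_te0', hC, hSK1, hSK2, hTT, hTT', neg_zero, neg_neg]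
  have o73 : CD.inner (CD.pair a b) (CD.te0 (m+1+1)) = 0 := (CD.inner_comm _ _).trans o37
  have o45 : CD.inner (CD.tilde (CD.pair a b)) (CD.pair a b * CD.eps (m+1)) = 0 := by
    rw [hv5]; simp [hE, hT, hEps, CD.tilde_pairP, CD.inner_pairP, CD.inner_zero_left, CD.inner_zero_right, CD.inner_neg_left, CD.inner_neg_right, CD.inner_tilde_self, CD.inner_self_tilde, CD.inner_e0_te0, CD.inner_te0_e0, ha1, hb1, ha2, hb2, ha1', hb1', ha2', hb2', hta_e0, hta_te0, htb_e0, htb_te0, hta_e0', hta_te0', htb_e0', htb_te0', hC, hSK1, hSK2, hTT, hTT', neg_zero, neg_neg]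
  have o54 : CD.inner (CD.pair a b * CD.eps (m+1)) (CD.tilde (CD.pair a b)) = 0 := (CD.inner_comm _ _).trans o45
  have o46 : CD.inner (CD.tilde (CD.pair a b)) (CD.tilde (CD.eps (m+1)) * CD.pair a b) = 0 := by
    rw [hv6]; simp [hE, hT, hEps, CD.tilde_pairP, CD.inner_pairP, CD.inner_zero_left, CD.inner_zero_right, CD.inner_neg_left, CD.inner_neg_right, CD.inner_tilde_self, CD.inner_self_tilde, CD.inner_e0_te0, CD.inner_te0_e0, ha1, hb1, ha2, hb2, ha1', hb1', ha2', hb2', hta_e0, hta_te0, htb_e0, htb_te0, hta_e0', hta_te0', htb_e0', htb_te0', hC, hSK1, hSK2, hTT, hTT', neg_zero, neg_neg]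
  have o64 : CD.inner (CD.tilde (CD.eps (m+1)) * CD.pair a b) (CD.tilde (CD.pair a b)) = 0 := (CD.inner_comm _ _).trans o46
  have o47 : CD.inner (CD.tilde (CD.pair a b)) (CD.pair a b) = 0 := by
    simp [hE, hT, hEps, CD.tilde_pairP, CD.inner_pairP, CD.inner_zero_left, CD.inner_zero_right, CD.inner_neg_left, CD.inner_neg_right, CD.inner_tilde_self, CD.inner_self_tilde, CD.inner_e0_te0, CD.inner_te0_e0, ha1, hb1, ha2, hb2, ha1', hb1', ha2', hb2', hta_e0, hta_te0, htb_e0, htb_te0, hta_e0', hta_te0', htb_e0', htb_te0', hC, hSK1, hSK2, hTT, hTT', neg_zero, neg_neg]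
  have o74 : CD.inner (CD.pair a b) (CD.tilde (CD.pair a b)) = 0 := (CD.inner_comm _ _).trans o47
  have o56 : CD.inner (CD.pair a b * CD.eps (m+1)) (CD.tilde (CD.eps (m+1)) * CD.pair a b) = 0 := by
    rw [hv5, hv6]; simp [hE, hT, hEps, CD.tilde_pairP, CD.inner_pairP, CD.inner_zero_left, CD.inner_zero_right, CD.inner_neg_left, CD.inner_neg_right, CD.inner_tilde_self, CD.inner_self_tilde, CD.inner_e0_te0, CD.inner_te0_e0, ha1, hb1, ha2, hb2, ha1', hb1', ha2', hb2', hta_e0, hta_te0, htb_e0, htb_te0, hta_e0', hta_te0', htb_e0', htb_te0', hC, hSK1, hSK2, hTT, hTT', neg_zero, neg_neg]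
  have o65 : CD.inner (CD.tilde (CD.eps (m+1)) * CD.pair a b) (CD.pair a b * CD.eps (m+1)) = 0 := (CD.inner_comm _ _).trans o56
  have o57 : CD.inner (CD.pair a b * CD.eps (m+1)) (CD.pair a b) = 0 := by
    rw [hv5]; simp [hE, hT, hEps, CD.tilde_pairP, CD.inner_pairP, CD.inner_zero_left, CD.inner_zero_right, CD.inner_neg_left, CD.inner_neg_right, CD.inner_tilde_self, CD.inner_self_tilde, CD.inner_e0_te0, CD.inner_te0_e0, ha1, hb1, ha2, hb2, ha1', hb1', ha2', hb2', hta_e0, hta_te0, htb_e0, htb_te0, hta_e0', hta_te0', htb_e0', htb_te0', hC, hSK1, hSK2, hTT, hTT', neg_zero, neg_neg]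
  have o75 : CD.inner (CD.pair a b) (CD.pair a b * CD.eps (m+1)) = 0 := (CD.inner_comm _ _).trans o57
  have o67 : CD.inner (CD.tilde (CD.eps (m+1)) * CD.pair a b) (CD.pair a b) = 0 := by
    rw [hv6]; simp [hE, hT, hEps, CD.tilde_pairP, CD.inner_pairP, CD.inner_zero_left, CD.inner_zero_right, CD.inner_neg_left, CD.inner_neg_right, CD.inner_tilde_self, CD.inner_self_tilde, CD.inner_e0_te0, CD.inner_te0_e0, ha1, hb1, ha2, hb2, ha1', hb1', ha2', hb2', hta_e0, hta_te0, htb_e0, htb_te0, hta_e0', hta_te0', htb_e0', htb_te0', hC, hSK1, hSK2, hTT, hTT', neg_zero, neg_neg]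
  have o76 : CD.inner (CD.pair a b) (CD.tilde (CD.eps (m+1)) * CD.pair a b) = 0 := (CD.inner_comm _ _).trans o67
  have horth : ∀ i j, i ≠ j →
      CD.inner (ovec (CD.pair a b) i) (ovec (CD.pair a b) j) = 0 := by
    intro i j hij
    fin_cases i <;> fin_cases j
    · exact absurd rfl hij
    · exact o01
    · exact o02
    · exact o03
    · exact o04
    · exact o05
    · exact o06
    · exact o07
    · exact o10
    · exact absurd rfl hij
    · exact o12
    · exact o13
    · exact o14
    · exact o15
    · exact o16
    · exact o17
    · exact o20
    · exact o21
    · exact absurd rfl hij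
    · exact o23
    · exact o24
    · exact o25
    · exact o26
    · exact o27
    · exact o30
    · exact o31
    · exact o32
    · exact absurd rfl hij
    · exact o34
    · exact o35
    · exact o36
    · exact o37
    · exact o40
    · exact o41
    · exact o42
    · exact o43
    · exact absurd rfl hij
    · exact o45
    · exact o46
    · exact o47
    · exact o50
    · exact o51
    · exact o52
    · exact o53
    · exact o54
    · exact absurd rfl hij
    · exact o56
    · exact o57
    · exact o60
    · exact o61
    · exact o62
    · exact o63
    · exact o64
    · exact o65
    · exact absurd rfl hij
    · exact o67
    · exact o70
    · exact o71
    · exact o72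
    · exact o73
    · exact o74
    · exact o75
    · exact o76
    · exact absurd rfl hij
  refine ⟨hnz, horth, ?_⟩
  have li : LinearIndependent ℝ (ovec (CD.pair a b)) :=
    CD.linearIndependent_of_orth _ hnz horth
  show Module.finrank ℝ (Submodule.span ℝ (Set.range (ovec (CD.pair a b)))) = 8
  rw [finrank_span_eq_card li]
  simp
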